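/- Lemma 2.3: the partition λ is a rectangle if and only if there exists a unique element of S_λ at which the statistic des attains its maximum. Moreover, if λ = (r,…,r) with m parts, then both des and maj attain their maximal values over S_{r,m} at the word w₀ = (m (m−1) ⋯ 2 1)^r, namely des(w₀) = r(m−1) and maj(w₀) = r²·binom(m,2). -/

import Mathlib

open Finset

/-- The letter (`0`-based) at (`0`-based) position `i` of the word `w`;
junk value `0` out of range. -/
def letterAt {N m : ℕ} (w : Fin N → Fin m) (i : ℕ) : ℕ :=
  if h : i < N then (w ⟨i, h⟩ : ℕ) else 0

/-- Descent set: the `1`-based positions `i ∈ {1,…,N−1}` with `w_i > w_{i+1}`. -/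
def desSet {N m : ℕ} (w : Fin N → Fin m) : Finset ℕ :=
  (Finset.Ico 1 N).filter fun i => letterAt w i < letterAt w (i - 1)

/-- Descent number `des`. -/
def des {N m : ℕ} (w : Fin N → Fin m) : ℕ := (desSet w).card

/-- Major index `maj`. -/
def maj {N m : ℕ} (w : Fin N → Fin m) : ℕ := ∑ i ∈ desSet w, i

/-- Multiset permutations: words of length `N` over the alphabet `Fin m` (the letter `i+1`
of `{1,…,m}` being encoded by `i : Fin m`) in which letter `i` occurs exactly `lam i` times. -/
def multisetPerms (N m : ℕ) (lam : Fin m → ℕ) : Finset (Fin N → Fin m) :=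
  Finset.univ.filter fun w => ∀ i, (Finset.univ.filter fun j => w j = i).card = lam i


lemma letterAt_lt {N m : ℕ} (w : Fin N → Fin m) {i : ℕ} (h : i < N) :
    letterAt w i < m := by
  simp [letterAt, h]

lemma letterAt_eq {N m : ℕ} (w : Fin N → Fin m) {i : ℕ} (h : i < N) :
    letterAt w i = (w ⟨i, h⟩ : ℕ) := by simp [letterAt, h]

lemma desSet_subset {N m : ℕ} (w : Fin N → Fin m) : desSet w ⊆ Finset.Ico 1 N :=
  Finset.filter_subset _ _

lemma mem_desSet {N m : ℕ} (w : Fin N → Fin m) {p : ℕ} :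
    p ∈ desSet w ↔ (1 ≤ p ∧ p < N) ∧ letterAt w p < letterAt w (p - 1) := by
  simp [desSet, Finset.mem_filter, Finset.mem_Ico]

lemma card_filter_fin (n : ℕ) (P : ℕ → Prop) [DecidablePred P] :
    ((Finset.univ : Finset (Fin n)).filter fun j => P j.val).card
      = ((Finset.range n).filter P).card := by
  rw [← Finset.card_image_of_injOn (s := (Finset.univ : Finset (Fin n)).filter fun j => P j.val)
    (f := Fin.val) (Fin.val_injective.injOn)]
  congr 1
  ext a
  simp only [Finset.mem_image, Finset.mem_filter, Finset.mem_univ, true_and,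
    Finset.mem_range]
  constructor
  · rintro ⟨j, hPj, rfl⟩; exact ⟨j.isLt, hPj⟩
  · rintro ⟨ha, hPa⟩; exact ⟨⟨a, ha⟩, hPa, rfl⟩

/-- decreasing run lemma -/
lemma run_dec {N m : ℕ} (w : Fin N → Fin m) {a b : ℕ}
    (hrun : ∀ p, a < p → p ≤ b → p ∈ desSet w) :
    ∀ d c, a ≤ c → c + d ≤ b → letterAt w (c + d) + d ≤ letterAt w c := by
  intro d
  induction d with
  | zero => intro c _ _; simp
  | succ d ih =>
    intro c hc hcd
    have e1 : c + (d + 1) = c + d + 1 := by omega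
    rw [e1]
    have h1 := ih c hc (by omega)
    have h2 := hrun (c + d + 1) (by omega) (by omega)
    rw [mem_desSet] at h2
    have : c + d + 1 - 1 = c + d := by omega
    rw [this] at h2
    omega

lemma block_nondes {N m : ℕ} (hm : 0 < m) (w : Fin N → Fin m) {a : ℕ}
    (ha : 1 ≤ a) (hab : a + m ≤ N) :
    ∃ p, a ≤ p ∧ p < a + m ∧ p ∉ desSet w := by
  by_contra h
  push_neg at h
  have hrun : ∀ p, (a - 1) < p → p ≤ a - 1 + m → p ∈ desSet w := by
    intro p h1 h2
    exact h p (by omega) (by omega)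
  have := run_dec w hrun m (a - 1) le_rfl le_rfl
  have h3 : letterAt w (a - 1) < m := letterAt_lt w (by omega)
  omega

/-- Lemma A : suffix descent count bound -/
lemma suffix_des_le {N m : ℕ} (hm : 0 < m) (w : Fin N → Fin m) :
    ∀ j, 1 ≤ j → (desSet w ∩ Finset.Ico j N).card ≤ (N - j) - (N - j) / m := by
  have key : ∀ K j, 1 ≤ j → N - j ≤ K →
      (desSet w ∩ Finset.Ico j N).card ≤ (N - j) - (N - j) / m := by
    intro K
    induction K with
    | zero =>
      intro j hj hK
      have : Finset.Ico j N = ∅ := by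
        apply Finset.Ico_eq_empty; omega
      simp [this]
    | succ K ih =>
      intro j hj hK
      by_cases hcase : N - j < m
      · have h0 : (N - j) / m = 0 := Nat.div_eq_of_lt hcase
        calc (desSet w ∩ Finset.Ico j N).card ≤ (Finset.Ico j N).card :=
              Finset.card_le_card Finset.inter_subset_right
          _ = N - j := Nat.card_Ico j N
          _ = (N - j) - (N - j) / m := by omega
      · have hjm : j + m ≤ N := by omega
        obtain ⟨p, hp1, hp2, hp3⟩ := block_nondes hm w hj hjm
        have hsub : desSet w ∩ Finset.Ico j N ⊆
            (Finset.Ico j (j + m)).erase p ∪ (desSet w ∩ Finset.Ico (j + m) N) := by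
          intro x hx
          rw [Finset.mem_inter, Finset.mem_Ico] at hx
          rcases lt_or_ge x (j + m) with h | h
          · apply Finset.mem_union_left
            rw [Finset.mem_erase, Finset.mem_Ico]
            exact ⟨fun hxp => hp3 (hxp ▸ hx.1), hx.2.1, h⟩
          · apply Finset.mem_union_right
            rw [Finset.mem_inter, Finset.mem_Ico]
            exact ⟨hx.1, h, hx.2.2⟩
        have hcard := Finset.card_le_card hsub
        have h1 : ((Finset.Ico j (j + m)).erase p).card = m - 1 := by
          rw [Finset.card_erase_of_mem (by rw [Finset.mem_Ico]; omega), Nat.card_Ico]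
          omega
        have h2 := ih (j + m) (by omega) (by omega)
        have h3 := Finset.card_union_le ((Finset.Ico j (j + m)).erase p)
          (desSet w ∩ Finset.Ico (j + m) N)
        have h4 : N - (j + m) = N - j - m := by omega
        rw [h4] at h2
        have h5 : (N - j - m) / m + 1 = (N - j) / m := by
          rw [← Nat.add_div_right _ hm]
          congr 1
          omega
        have h6 : (N - j - m) / m ≤ N - j - m := Nat.div_le_self _ _
        omega
  intro j hj
  exact key (N - j) j hj le_rfl

/-! ### List machinery -/

def runL (a : ℕ) : List ℕ := (List.range a).reverse

def stair : List ℕ → List ℕ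
  | [] => []
  | a :: t => runL a ++ stair t

def ldes : List ℕ → ℕ
  | [] => 0
  | [_] => 0
  | a :: b :: t => (if b < a then 1 else 0) + ldes (b :: t)

lemma runL_succ (a : ℕ) : runL (a + 1) = a :: runL a := by
  simp [runL, List.range_succ]

@[simp] lemma length_runL (a : ℕ) : (runL a).length = a := by simp [runL]

lemma length_stair (L : List ℕ) : (stair L).length = L.sum := by
  induction L with
  | nil => simp [stair]
  | cons a t ih => simp [stair, ih]

lemma mem_stair_lt {L : List ℕ} {x : ℕ} (hx : x ∈ stair L) : ∃ a ∈ L, x < a := by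
  induction L with
  | nil => simp [stair] at hx
  | cons a t ih =>
    rw [stair, List.mem_append] at hx
    rcases hx with h | h
    · exact ⟨a, List.mem_cons_self, by simpa [runL] using h⟩
    · obtain ⟨b, hb, hxb⟩ := ih h
      exact ⟨b, List.mem_cons_of_mem a hb, hxb⟩

lemma getD_runL {a j : ℕ} (h : j < a) : (runL a).getD j 0 = a - 1 - j := by
  rw [runL, List.getD_eq_getElem _ _ (by simpa using h)]
  rw [List.getElem_reverse]
  simp

lemma getD_stair_replicate (m : ℕ) : ∀ r j, j < r * m →
    (stair (List.replicate r m)).getD j 0 = m - 1 - (j % m) := by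
  intro r
  induction r with
  | zero => intro j hj; omega
  | succ r ih =>
    intro j hj
    rw [List.replicate_succ, stair]
    rcases lt_or_ge j m with h | h
    · rw [List.getD_append _ _ _ _ (by simpa using h), getD_runL h,
        Nat.mod_eq_of_lt h]
    · rw [List.getD_append_right _ _ _ _ (by simpa using h)]
      have h2 : j - m < r * m := by
        have : (r + 1) * m = r * m + m := by ring
        omega
      rw [length_runL, ih (j - m) h2]
      congr 1
      conv_rhs => rw [← Nat.sub_add_cancel h]
      rw [Nat.add_mod_right]

lemma count_runL (a c : ℕ) : (runL a).count c = if c < a then 1 else 0 := by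
  rw [runL, List.count_reverse]
  rcases lt_or_ge c a with h | h
  · rw [if_pos h]
    exact List.count_eq_one_of_mem (List.nodup_range) (by simpa using h)
  · rw [if_neg (by omega)]
    exact List.count_eq_zero_of_not_mem (by simp; omega)

lemma count_stair (L : List ℕ) (c : ℕ) :
    (stair L).count c = L.countP (fun a => c < a) := by
  induction L with
  | nil => simp [stair]
  | cons a t ih =>
    rw [stair, List.count_append, List.countP_cons, ih, count_runL]
    simp only [decide_eq_true_eq]
    omega

lemma ldes_cons_cons (a b : ℕ) (t : List ℕ) :
    ldes (a :: b :: t) = (if b < a then 1 else 0) + ldes (b :: t) := rfl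

lemma ldes_runL_append : ∀ a, 1 ≤ a → ∀ S : List ℕ, ldes (runL a ++ S) = (a - 1) + ldes S := by
  intro a
  induction a with
  | zero => omega
  | succ a ih =>
    intro _ S
    rcases Nat.eq_zero_or_pos a with rfl | ha
    · show ldes (runL 1 ++ S) = 0 + ldes S
      have h1 : runL 1 = [0] := by simp [runL, List.range_succ]
      rw [h1]
      cases S with
      | nil => simp [ldes]
      | cons b t => simp [ldes]
    · obtain ⟨k, rfl⟩ : ∃ k, a = k + 1 := ⟨a - 1, by omega⟩
      have hcons : runL (k + 1 + 1) ++ S = (k + 1) :: k :: (runL k ++ S) := by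
        rw [runL_succ, runL_succ]; simp
      have h3 : runL (k + 1) ++ S = k :: (runL k ++ S) := by rw [runL_succ]; simp
      have h2 : ldes (runL (k + 1) ++ S) = (k + 1 - 1) + ldes S := ih (by omega) S
      rw [h3] at h2
      rw [hcons, ldes_cons_cons, h2]
      simp only [if_pos (by omega : k < k + 1)]
      omega

lemma length_le_sum {L : List ℕ} (h : ∀ a ∈ L, 1 ≤ a) : L.length ≤ L.sum := by
  induction L with
  | nil => simp
  | cons a t ih =>
    simp only [List.length_cons, List.sum_cons]
    have := h a (List.mem_cons_self)
    have := ih (fun b hb => h b (List.mem_cons_of_mem a hb))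
    omega

lemma ldes_stair {L : List ℕ} (h : ∀ a ∈ L, 1 ≤ a) :
    ldes (stair L) + L.length = L.sum := by
  induction L with
  | nil => simp [stair, ldes]
  | cons a t ih =>
    have ha := h a (List.mem_cons_self)
    have iht := ih (fun b hb => h b (List.mem_cons_of_mem a hb))
    rw [stair, ldes_runL_append a ha]
    simp only [List.length_cons, List.sum_cons]
    omega

lemma ldes_sum : ∀ W : List ℕ,
    (∑ i ∈ Finset.range (W.length - 1),
      if W.getD (i + 1) 0 < W.getD i 0 then 1 else 0) = ldes W := by
  intro W
  induction W with
  | nil => simp [ldes]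
  | cons a T ih =>
    cases T with
    | nil => simp [ldes]
    | cons b t =>
      have hlen : (a :: b :: t).length - 1 = ((b :: t).length - 1) + 1 := by
        simp
      rw [hlen, Finset.sum_range_succ']
      have e1 : (∑ x ∈ Finset.range ((b :: t).length - 1),
          if (a :: b :: t).getD (x + 1 + 1) 0 < (a :: b :: t).getD (x + 1) 0 then 1 else 0)
          = ∑ x ∈ Finset.range ((b :: t).length - 1),
          if (b :: t).getD (x + 1) 0 < (b :: t).getD x 0 then 1 else 0 :=
        Finset.sum_congr rfl (fun x _ => rfl)
      rw [e1, ih]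
      have e2 : ((a :: b :: t).getD (0 + 1) 0) = b := rfl
      have e3 : ((a :: b :: t).getD 0 0) = a := rfl
      rw [e2, e3, ldes_cons_cons]
      omega

/-! ### Bridges between words as functions and lists -/

lemma des_bridge {N m : ℕ} (v : Fin N → Fin m) (W : List ℕ)
    (hlen : W.length = N) (hW : ∀ j : Fin N, (v j : ℕ) = W.getD (j : ℕ) 0) :
    des v = ldes W := by
  have hW' : ∀ i, i < N → letterAt v i = W.getD i 0 := by
    intro i hi
    rw [letterAt_eq v hi]
    exact hW ⟨i, hi⟩
  rw [des, desSet, Finset.card_filter]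
  rw [Finset.sum_Ico_eq_sum_range]
  rw [← ldes_sum W, hlen]
  apply Finset.sum_congr rfl
  intro i hi
  rw [Finset.mem_range] at hi
  have h1 : 1 + i < N := by omega
  have h2 : 1 + i - 1 = i := by omega
  rw [h2, hW' _ h1, hW' i (by omega)]
  have h3 : 1 + i = i + 1 := by omega
  rw [h3]

lemma count_list_aux (c : ℕ) : ∀ W : List ℕ,
    ((Finset.range W.length).filter fun x => W.getD x 0 = c).card = W.count c := by
  intro W
  induction W with
  | nil => simp
  | cons a t ih =>
    rw [Finset.card_filter, List.length_cons, Finset.sum_range_succ']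
    have e1 : (∑ i ∈ Finset.range t.length,
        if (a :: t).getD (i + 1) 0 = c then 1 else 0)
        = ∑ i ∈ Finset.range t.length, if t.getD i 0 = c then 1 else 0 :=
      Finset.sum_congr rfl (fun x _ => rfl)
    rw [e1, ← Finset.card_filter, ih]
    have e2 : ((a :: t).getD 0 0) = a := rfl
    rw [e2, List.count_cons]
    by_cases h : a = c <;> simp [h]

lemma count_bridge {N m : ℕ} (v : Fin N → Fin m) (W : List ℕ)
    (hlen : W.length = N) (hW : ∀ j : Fin N, (v j : ℕ) = W.getD (j : ℕ) 0) (c : Fin m) :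
    ((Finset.univ : Finset (Fin N)).filter fun j => v j = c).card = W.count (c : ℕ) := by
  have e1 : ((Finset.univ : Finset (Fin N)).filter fun j => v j = c)
      = (Finset.univ : Finset (Fin N)).filter fun j => W.getD (j.val) 0 = (c : ℕ) := by
    apply Finset.filter_congr
    intro j _
    rw [← hW j]
    simp [Fin.ext_iff]
  rw [e1, card_filter_fin N (fun x => W.getD x 0 = (c : ℕ)), ← hlen, count_list_aux]

lemma countP_replicate (p : ℕ → Bool) (n x : ℕ) :
    (List.replicate n x).countP p = if p x then n else 0 := by
  induction n with
  | zero => simp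
  | succ n ih =>
    rw [List.replicate_succ, List.countP_cons, ih]
    by_cases h : p x <;> simp [h]

lemma countP_range (q : ℕ → Bool) (n : ℕ) :
    (List.range n).countP q = ((Finset.range n).filter fun k => q k = true).card := by
  induction n with
  | zero => simp
  | succ n ih =>
    rw [List.range_succ, List.countP_append, ih, Finset.range_add_one,
      Finset.filter_insert]
    by_cases h : q n = true <;>
      simp [h, Finset.card_insert_of_notMem, Finset.notMem_range_self, List.countP_cons]

/-! ### The word w₀ -/

section W0
variable {N m r : ℕ}

lemma w0_desSet (hm : 0 < m) (hN : N = r * m) (w : Fin N → Fin m)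
    (hw : ∀ j : Fin N, (w j : ℕ) = m - 1 - ((j : ℕ) % m)) :
    desSet w = (Finset.Ico 1 N).filter fun i => ¬ m ∣ i := by
  unfold desSet
  apply Finset.filter_congr
  intro i hi
  rw [Finset.mem_Ico] at hi
  have h1 : letterAt w i = m - 1 - (i % m) := by
    rw [letterAt_eq w hi.2]; exact hw ⟨i, hi.2⟩
  have h2 : letterAt w (i - 1) = m - 1 - ((i - 1) % m) := by
    rw [letterAt_eq w (by omega)]; exact hw ⟨i - 1, by omega⟩
  have hsm : i % m < m := Nat.mod_lt _ hm
  constructor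
  · intro hlt hdvd
    obtain ⟨q, rfl⟩ := hdvd
    have hq : 1 ≤ q := by
      rcases Nat.eq_zero_or_pos q with rfl | h
      · simp at hi
      · exact h
    have e1 : m * q % m = 0 := by simp
    have e2 : (m * q - 1) % m = m - 1 := by
      have : m * q - 1 = m * (q - 1) + (m - 1) := by
        have : m * q = m * (q - 1) + m := by
          obtain ⟨q', rfl⟩ : ∃ q', q = q' + 1 := ⟨q - 1, by omega⟩
          ring_nf
          omega
        omega
      rw [this, Nat.mul_add_mod]
      omega
    rw [h1, h2, e1, e2] at hlt
    omega
  · intro hndvd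
    have hs1 : 1 ≤ i % m := by
      rcases Nat.eq_zero_or_pos (i % m) with h | h
      · exact absurd (Nat.dvd_of_mod_eq_zero h) hndvd
      · exact h
    have e2 : (i - 1) % m = i % m - 1 := by
      have hd := Nat.div_add_mod i m
      have : i - 1 = m * (i / m) + (i % m - 1) := by omega
      rw [this, Nat.mul_add_mod]
      exact Nat.mod_eq_of_lt (by omega)
    rw [h1, h2, e2]
    omega

lemma w0_suffix_ge (hm : 0 < m) (hN : N = r * m) (w : Fin N → Fin m)
    (hw : ∀ j : Fin N, (w j : ℕ) = m - 1 - ((j : ℕ) % m)) :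
    ∀ j, 1 ≤ j → (N - j) - (N - j) / m ≤ (desSet w ∩ Finset.Ico j N).card := by
  intro j hj
  have hset : desSet w ∩ Finset.Ico j N = (Finset.Ico j N).filter fun i => ¬ m ∣ i := by
    rw [w0_desSet hm hN w hw]
    ext x
    simp only [Finset.mem_inter, Finset.mem_filter, Finset.mem_Ico]
    constructor
    · rintro ⟨⟨⟨_, _⟩, h⟩, ⟨h3, h4⟩⟩; exact ⟨⟨h3, h4⟩, h⟩
    · rintro ⟨⟨h3, h4⟩, h⟩; exact ⟨⟨⟨by omega, h4⟩, h⟩, ⟨h3, h4⟩⟩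
  rw [hset]
  have hsplit := Finset.card_filter_add_card_filter_not
    (s := Finset.Ico j N) (p := fun i => m ∣ i)
  rw [Nat.card_Ico] at hsplit
  have hdvd_le : ((Finset.Ico j N).filter fun i => m ∣ i).card ≤ (N - j) / m := by
    have key : ∀ i ∈ (Finset.Ico j N).filter fun i => m ∣ i,
        i + m ≤ N ∧ (i - j) / m < (N - j) / m := by
      intro i hi
      rw [Finset.mem_filter, Finset.mem_Ico] at hi
      obtain ⟨⟨hij, hiN⟩, t, rfl⟩ := hi
      have ht : t < r := by
        by_contra h
        push_neg at h
        have : r * m ≤ m * t := by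
          calc r * m ≤ t * m := Nat.mul_le_mul_right m h
            _ = m * t := by ring
        omega
      have him : m * t + m ≤ N := by
        have : (t + 1) * m ≤ r * m := Nat.mul_le_mul_right m (by omega)
        have e : (t + 1) * m = m * t + m := by ring
        omega
      refine ⟨him, ?_⟩
      have h2 : m * t - j + m ≤ N - j := by omega
      have h3 : (m * t - j + m) / m = (m * t - j) / m + 1 := Nat.add_div_right _ hm
      have h4 : (m * t - j + m) / m ≤ (N - j) / m := Nat.div_le_div_right h2
      omega
    have hmono : ∀ a ∈ (Finset.Ico j N).filter fun i => m ∣ i,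
        ∀ b ∈ (Finset.Ico j N).filter fun i => m ∣ i, a < b →
        (a - j) / m < (b - j) / m := by
      intro a ha b hb hab
      rw [Finset.mem_filter, Finset.mem_Ico] at ha hb
      have hdvd : m ∣ b - a := Nat.dvd_sub hb.2 ha.2
      have : m ≤ b - a := Nat.le_of_dvd (by omega) hdvd
      have h2 : a - j + m ≤ b - j := by omega
      have h3 : (a - j + m) / m = (a - j) / m + 1 := Nat.add_div_right _ hm
      have h4 : (a - j + m) / m ≤ (b - j) / m := Nat.div_le_div_right h2
      omega
    rw [← Finset.card_range ((N - j) / m)]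
    apply Finset.card_le_card_of_injOn (f := fun i => (i - j) / m)
      (fun i hi => Finset.mem_range.mpr (key i hi).2)
    intro a ha b hb hab
    by_contra hne
    rcases lt_trichotomy a b with h | h | h
    · exact absurd hab (Nat.ne_of_lt (hmono a ha b hb h))
    · exact hne h
    · exact absurd hab.symm (Nat.ne_of_lt (hmono b hb a ha h))
  omega

end W0

lemma maj_sum {N m : ℕ} (w : Fin N → Fin m) :
    maj w = ∑ j ∈ Finset.Ico 1 N, (desSet w ∩ Finset.Ico j N).card := by
  have e1 : ∀ j, (desSet w ∩ Finset.Ico j N).card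
      = ∑ i ∈ desSet w, if i ∈ Finset.Ico j N then 1 else 0 := by
    intro j
    rw [← Finset.card_filter, Finset.filter_mem_eq_inter]
  simp_rw [e1]
  rw [Finset.sum_comm]
  unfold maj
  apply Finset.sum_congr rfl
  intro i hi
  have hi' := desSet_subset w hi
  rw [Finset.mem_Ico] at hi'
  rw [← Finset.card_filter]
  have e2 : (Finset.Ico 1 N).filter (fun j => i ∈ Finset.Ico j N) = Finset.Ico 1 (i + 1) := by
    ext x
    simp only [Finset.mem_filter, Finset.mem_Ico]
    omega
  rw [e2, Nat.card_Ico]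
  omega

/-- global descent bound -/
lemma des_le_global {N m r : ℕ} (hm : 0 < m) (hN : N = r * m) (v : Fin N → Fin m) :
    des v ≤ r * (m - 1) := by
  rcases Nat.eq_zero_or_pos r with rfl | hr
  · have : desSet v = ∅ := by
      have := desSet_subset v
      simp only [hN] at this ⊢
      simpa using this
    simp [des, this]
  · have h1 : desSet v ∩ Finset.Ico 1 N = desSet v :=
      Finset.inter_eq_left.mpr (desSet_subset v)
    have h2 := suffix_des_le hm v 1 le_rfl
    rw [h1] at h2
    have e1 : r * m = (r - 1) * m + m := by
      obtain ⟨r', rfl⟩ : ∃ r', r = r' + 1 := ⟨r - 1, by omega⟩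
      simp only [Nat.add_sub_cancel]
      ring
    have e2 : N - 1 = (m - 1) + (r - 1) * m := by omega
    have e3 : (N - 1) / m = r - 1 := by
      rw [e2, Nat.add_mul_div_right _ _ hm, Nat.div_eq_of_lt (by omega)]
      omega
    have e4 : r * (m - 1) + r = r * m := by
      obtain ⟨m', rfl⟩ : ∃ m', m = m' + 1 := ⟨m - 1, by omega⟩
      simp only [Nat.add_sub_cancel]
      ring
    rw [des]
    omega

lemma w0_des_val {N m r : ℕ} (hm : 0 < m) (hN : N = r * m) (w : Fin N → Fin m)
    (hw : ∀ j : Fin N, (w j : ℕ) = m - 1 - ((j : ℕ) % m)) :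
    des w = r * (m - 1) := by
  have hlen : (stair (List.replicate r m)).length = N := by
    rw [length_stair, List.sum_replicate, smul_eq_mul, hN]
  have hW : ∀ j : Fin N, (w j : ℕ) = (stair (List.replicate r m)).getD (j : ℕ) 0 := by
    intro j
    rw [hw j, getD_stair_replicate m r j (by rw [← hN]; exact j.isLt)]
  rw [des_bridge w _ hlen hW]
  have hall : ∀ a ∈ List.replicate r m, 1 ≤ a := by
    intro a ha
    rw [List.eq_of_mem_replicate ha]
    omega
  have := ldes_stair hall
  rw [List.length_replicate, List.sum_replicate, smul_eq_mul] at this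
  have e4 : r * (m - 1) + r = r * m := by
    obtain ⟨m', rfl⟩ : ∃ m', m = m' + 1 := ⟨m - 1, by omega⟩
    simp only [Nat.add_sub_cancel]
    ring
  omega

lemma w0_mem {N m r : ℕ} (hm : 0 < m) (hN : N = r * m) (w : Fin N → Fin m)
    (hw : ∀ j : Fin N, (w j : ℕ) = m - 1 - ((j : ℕ) % m)) (c : Fin m) :
    ((Finset.univ : Finset (Fin N)).filter fun j => w j = c).card = r := by
  have hlen : (stair (List.replicate r m)).length = N := by
    rw [length_stair, List.sum_replicate, smul_eq_mul, hN]
  have hW : ∀ j : Fin N, (w j : ℕ) = (stair (List.replicate r m)).getD (j : ℕ) 0 := by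
    intro j
    rw [hw j, getD_stair_replicate m r j (by rw [← hN]; exact j.isLt)]
  rw [count_bridge w _ hlen hW, count_stair, countP_replicate]
  simp [c.isLt]

lemma two_mul_choose_two (m : ℕ) : 2 * Nat.choose m 2 = m * (m - 1) := by
  induction m with
  | zero => simp
  | succ m ih =>
    rw [Nat.choose_succ_succ, Nat.choose_one_right, Nat.mul_add, ih]
    simp only [Nat.add_sub_cancel]
    obtain rfl | hm := Nat.eq_zero_or_pos m
    · simp
    · obtain ⟨k, rfl⟩ : ∃ k, m = k + 1 := ⟨m - 1, by omega⟩
      simp only [Nat.add_sub_cancel]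
      ring

lemma w0_maj_val {N m r : ℕ} (hm : 0 < m) (hN : N = r * m) (w : Fin N → Fin m)
    (hw : ∀ j : Fin N, (w j : ℕ) = m - 1 - ((j : ℕ) % m)) :
    maj w = r ^ 2 * Nat.choose m 2 := by
  rcases Nat.eq_zero_or_pos r with rfl | hr
  · have hN0 : N = 0 := by omega
    have : desSet w = ∅ := by
      have := desSet_subset w
      simp only [hN0] at this ⊢
      simpa using this
    simp [maj, this]
  · have hD := w0_desSet hm hN w hw
    -- multiples image
    have himg : (Finset.Ico 1 N).filter (fun i => m ∣ i)
        = (Finset.range (r - 1)).image (fun t => (t + 1) * m) := by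
      ext x
      simp only [Finset.mem_filter, Finset.mem_Ico, Finset.mem_image, Finset.mem_range]
      constructor
      · rintro ⟨⟨hx1, hx2⟩, q, rfl⟩
        have hq1 : 1 ≤ q := by
          rcases Nat.eq_zero_or_pos q with rfl | h
          · simp at hx1
          · exact h
        have hq2 : q < r := by
          by_contra h
          push_neg at h
          have : r * m ≤ q * m := Nat.mul_le_mul_right m h
          have e : m * q = q * m := by ring
          omega
        refine ⟨q - 1, by omega, ?_⟩
        have : q - 1 + 1 = q := by omega
        rw [this]; ring
      · rintro ⟨t, ht, rfl⟩
        refine ⟨⟨Nat.mul_pos (by omega) hm, ?_⟩, ⟨t + 1, by ring⟩⟩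
        rw [hN]
        exact (Nat.mul_lt_mul_right hm).mpr (by omega)
    have hinj : Set.InjOn (fun t => (t + 1) * m) (Finset.range (r - 1)) := by
      intro a _ b _ hab
      simp only at hab
      have := Nat.eq_of_mul_eq_mul_right hm hab
      omega
    have hsumdvd : ∑ i ∈ (Finset.Ico 1 N).filter (fun i => m ∣ i), i
        = (∑ t ∈ Finset.range (r - 1), (t + 1)) * m := by
      rw [himg, Finset.sum_image hinj, Finset.sum_mul]
    have hsplit : (∑ i ∈ (Finset.Ico 1 N).filter (fun i => m ∣ i), i)
        + (∑ i ∈ (Finset.Ico 1 N).filter (fun i => ¬ m ∣ i), i)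
        = ∑ i ∈ Finset.Ico 1 N, i :=
      Finset.sum_filter_add_sum_filter_not _ _ _
    have hN1 : 1 ≤ N := by rw [hN]; exact Nat.mul_pos hr hm
    have hall : ∑ i ∈ Finset.Ico 1 N, i = ∑ i ∈ Finset.range N, i := by
      have : Finset.range N = insert 0 (Finset.Ico 1 N) := by
        ext x
        simp only [Finset.mem_range, Finset.mem_insert, Finset.mem_Ico]
        omega
      rw [this, Finset.sum_insert (by simp)]
      exact (zero_add _).symm
    have hgauss : (∑ i ∈ Finset.range N, i) * 2 = N * (N - 1) :=
      Finset.sum_range_id_mul_two N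
    have htri : (∑ t ∈ Finset.range (r - 1), (t + 1)) * 2 = r * (r - 1) := by
      have h1 : ∑ t ∈ Finset.range r, t = ∑ t ∈ Finset.range (r - 1), (t + 1) := by
        obtain ⟨r', rfl⟩ : ∃ r', r = r' + 1 := ⟨r - 1, by omega⟩
        rw [Finset.sum_range_succ']
        simp
      rw [← h1, Finset.sum_range_id_mul_two]
    set S1 := ∑ i ∈ (Finset.Ico 1 N).filter (fun i => m ∣ i), i with hS1
    set S2 := ∑ i ∈ (Finset.Ico 1 N).filter (fun i => ¬ m ∣ i), i with hS2
    set A := ∑ t ∈ Finset.range (r - 1), (t + 1) with hA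
    have hmaj : maj w = S2 := by rw [maj, hD]
    have h1 : 2 * S1 = (r * (r - 1)) * m := by
      calc 2 * S1 = (A * 2) * m := by rw [hsumdvd]; ring
        _ = (r * (r - 1)) * m := by rw [htri]
    have h2 : 2 * S2 + 2 * S1 = N * (N - 1) := by omega
    have hid : N * (N - 1) = (r * r) * (m * (m - 1)) + (r * (r - 1)) * m := by
      obtain ⟨a, rfl⟩ : ∃ a, r = a + 1 := ⟨r - 1, by omega⟩
      obtain ⟨b, rfl⟩ : ∃ b, m = b + 1 := ⟨m - 1, by omega⟩
      have hP : N = a * b + a + b + 1 := by rw [hN]; ring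
      rw [hP]
      simp only [Nat.add_sub_cancel]
      ring
    have hgoal2 : 2 * (r ^ 2 * Nat.choose m 2) = (r * r) * (m * (m - 1)) := by
      have h3 := two_mul_choose_two m
      calc 2 * (r ^ 2 * Nat.choose m 2)
          = (r * r) * (2 * Nat.choose m 2) := by ring
        _ = (r * r) * (m * (m - 1)) := by rw [h3]
    omega

lemma w0_maj_max {N m r : ℕ} (hm : 0 < m) (hN : N = r * m) (w : Fin N → Fin m)
    (hw : ∀ j : Fin N, (w j : ℕ) = m - 1 - ((j : ℕ) % m)) (v : Fin N → Fin m) :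
    maj v ≤ maj w := by
  rw [maj_sum v, maj_sum w]
  apply Finset.sum_le_sum
  intro j hj
  rw [Finset.mem_Ico] at hj
  calc (desSet v ∩ Finset.Ico j N).card ≤ (N - j) - (N - j) / m :=
        suffix_des_le hm v j hj.1
    _ ≤ (desSet w ∩ Finset.Ico j N).card := w0_suffix_ge hm hN w hw j hj.1

/-- descent bound for words with letter counts -/
lemma des_le_of_count {N m : ℕ} (hm : 0 < m) (v : Fin N → Fin m) (R : ℕ) (hR : 1 ≤ R)
    (hcount : ((Finset.univ : Finset (Fin N)).filter fun j => v j = ⟨0, hm⟩).card = R) :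
    des v ≤ N - R := by
  have hZ : ((Finset.range N).filter fun p => letterAt v p = 0).card = R := by
    rw [← hcount, ← card_filter_fin N (fun p => letterAt v p = 0)]
    congr 1
    apply Finset.filter_congr
    intro j _
    rw [letterAt_eq v j.isLt]
    simp [Fin.ext_iff]
  set Z := (Finset.range N).filter fun p => letterAt v p = 0 with hZdef
  set Z' := Z.filter (fun p => p < N - 1) with hZ'def
  have hZ'card : R - 1 ≤ Z'.card := by
    have hsplit := Finset.card_filter_add_card_filter_not
      (s := Z) (p := fun p => p < N - 1)
    rw [← hZ'def] at hsplit
    have hone : (Z.filter fun p => ¬ p < N - 1).card ≤ 1 := by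
      have : (Z.filter fun p => ¬ p < N - 1) ⊆ {N - 1} := by
        intro x hx
        rw [Finset.mem_filter] at hx
        have := hx.1
        rw [hZdef, Finset.mem_filter, Finset.mem_range] at this
        rw [Finset.mem_singleton]
        omega
      calc (Z.filter fun p => ¬ p < N - 1).card ≤ ({N - 1} : Finset ℕ).card :=
          Finset.card_le_card this
        _ = 1 := Finset.card_singleton _
    omega
  set ND := Finset.Ico 1 N \ desSet v with hNDdef
  have himg : Z'.image (fun p => p + 1) ⊆ ND := by
    intro x hx
    rw [Finset.mem_image] at hx
    obtain ⟨p, hp, rfl⟩ := hx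
    rw [hZ'def, Finset.mem_filter, hZdef, Finset.mem_filter, Finset.mem_range] at hp
    obtain ⟨⟨hpN, hp0⟩, hpN1⟩ := hp
    rw [hNDdef, Finset.mem_sdiff, Finset.mem_Ico]
    refine ⟨⟨by omega, by omega⟩, ?_⟩
    rw [mem_desSet]
    push_neg
    intro _
    have : p + 1 - 1 = p := by omega
    rw [this, hp0]
    omega
  have hNDcard : R - 1 ≤ ND.card := by
    calc R - 1 ≤ Z'.card := hZ'card
      _ = (Z'.image (fun p => p + 1)).card :=
        (Finset.card_image_of_injective _ (add_left_injective 1)).symm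
      _ ≤ ND.card := Finset.card_le_card himg
  have hsdiff : ND.card = (N - 1) - des v := by
    rw [hNDdef, Finset.card_sdiff_of_subset (desSet_subset v), Nat.card_Ico, des]
  have hdle : des v ≤ N - 1 := by
    rw [des]
    calc (desSet v).card ≤ (Finset.Ico 1 N).card := Finset.card_le_card (desSet_subset v)
      _ = N - 1 := Nat.card_Ico _ _
  have hRN : R ≤ N := by
    rw [← hcount]
    calc _ ≤ (Finset.univ : Finset (Fin N)).card := Finset.card_le_card (Finset.filter_subset _ _)
      _ = N := by simp
  omega

/-- Uniqueness: any word with maximal descent number is w₀. -/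
lemma unique_max_des {N m r : ℕ} (hm : 0 < m) (hN : N = r * m) (v : Fin N → Fin m)
    (hd : des v = r * (m - 1)) :
    ∀ j : Fin N, (v j : ℕ) = m - 1 - ((j : ℕ) % m) := by
  rcases Nat.lt_or_ge m 2 with hm2 | hm2
  · -- m = 1
    intro j
    have : m = 1 := by omega
    subst this
    have h1 : (v j : ℕ) < 1 := (v j).isLt
    omega
  rcases Nat.eq_zero_or_pos r with rfl | hr
  · intro j; exact absurd j.isLt (by omega)
  -- main case
  have hNpos : 1 ≤ N := by rw [hN]; exact Nat.mul_pos hr hm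
  have hDcard : (desSet v).card = r * (m - 1) := hd
  have e4 : r * (m - 1) + r = r * m := by
    obtain ⟨m', rfl⟩ : ∃ m', m = m' + 1 := ⟨m - 1, by omega⟩
    simp only [Nat.add_sub_cancel]; ring
  set ND := Finset.Ico 1 N \ desSet v with hNDdef
  have hNDcard : ND.card = r - 1 := by
    rw [hNDdef, Finset.card_sdiff_of_subset (desSet_subset v), Nat.card_Ico, hDcard]
    omega
  -- the block chooser
  have hblock : ∀ k, k < r - 1 → ∃ p, k * m + 1 ≤ p ∧ p ≤ k * m + m ∧ p ∈ ND := by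
    intro k hk
    have hbound : (k + 1) * m ≤ (r - 1) * m := Nat.mul_le_mul_right m (by omega)
    have hb1 : (k + 1) * m = k * m + m := by ring
    have hb2 : (r - 1) * m + m = r * m := by
      obtain ⟨r', rfl⟩ : ∃ r', r = r' + 1 := ⟨r - 1, by omega⟩
      simp only [Nat.add_sub_cancel]; ring
    obtain ⟨p, hp1, hp2, hp3⟩ := block_nondes hm v
      (a := k * m + 1) (by omega) (by omega)
    refine ⟨p, hp1, by omega, ?_⟩
    rw [hNDdef, Finset.mem_sdiff, Finset.mem_Ico]
    exact ⟨⟨by omega, by omega⟩, hp3⟩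
  classical
  set g : ℕ → ℕ := fun k => if h : k < r - 1 then (hblock k h).choose else 0 with hgdef
  have hgspec : ∀ k, k < r - 1 → k * m + 1 ≤ g k ∧ g k ≤ k * m + m ∧ g k ∈ ND := by
    intro k hk
    rw [hgdef]
    simp only [dif_pos hk]
    exact (hblock k hk).choose_spec
  have hginj : Set.InjOn g (Finset.range (r - 1)) := by
    intro a ha b hb hab
    simp only [Finset.coe_range, Set.mem_Iio] at ha hb
    by_contra hne
    have key : ∀ x y, x < y → y < r - 1 → g x < g y := by
      intro x y hxy hy
      have hx := hgspec x (by omega)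
      have hyy := hgspec y hy
      have : (x + 1) * m ≤ y * m := Nat.mul_le_mul_right m (by omega)
      have hb1 : (x + 1) * m = x * m + m := by ring
      omega
    rcases lt_trichotomy a b with h | h | h
    · exact absurd hab (Nat.ne_of_lt (key a b h hb))
    · exact hne h
    · exact absurd hab.symm (Nat.ne_of_lt (key b a h ha))
  have hG : (Finset.range (r - 1)).image g = ND := by
    apply Finset.eq_of_subset_of_card_le
    · intro x hx
      rw [Finset.mem_image] at hx
      obtain ⟨k, hk, rfl⟩ := hx
      rw [Finset.mem_range] at hk
      exact (hgspec k hk).2.2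
    · rw [Finset.card_image_of_injOn hginj, Finset.card_range, hNDcard]
  have hNDchar : ∀ p ∈ ND, ∃ k, k < r - 1 ∧ p = g k ∧ k * m + 1 ≤ p ∧ p ≤ k * m + m := by
    intro p hp
    rw [← hG, Finset.mem_image] at hp
    obtain ⟨k, hk, rfl⟩ := hp
    rw [Finset.mem_range] at hk
    obtain ⟨h1, h2, _⟩ := hgspec k hk
    exact ⟨k, hk, rfl, h1, h2⟩
  have hmemD : ∀ p, 1 ≤ p → p < N → p ∉ ND → p ∈ desSet v := by
    intro p h1 h2 h3
    by_contra h4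
    exact h3 (by rw [hNDdef, Finset.mem_sdiff, Finset.mem_Ico]; exact ⟨⟨h1, h2⟩, h4⟩)
  have htail : ∀ p, (r - 1) * m < p → p < N → p ∈ desSet v := by
    intro p hp1 hp2
    apply hmemD p (by omega) hp2
    intro hpND
    obtain ⟨k, hk, _, _, hk2⟩ := hNDchar p hpND
    have : (k + 1) * m ≤ (r - 1) * m := Nat.mul_le_mul_right m (by omega)
    have hb1 : (k + 1) * m = k * m + m := by ring
    omega
  have hrm : (r - 1) * m + m = r * m := by
    obtain ⟨r', rfl⟩ : ∃ r', r = r' + 1 := ⟨r - 1, by omega⟩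
    simp only [Nat.add_sub_cancel]; ring
  -- downward induction
  have C : ∀ d k, k < r → r - 1 - k = d → ∀ s, 1 ≤ s → s < m → k * m + s ∈ desSet v := by
    intro d
    induction d with
    | zero =>
      intro k hk hkd s hs1 hs2
      have hk' : k = r - 1 := by omega
      subst hk'
      apply htail _ (by omega)
      omega
    | succ d ih =>
      intro k hk hkd s hs1 hs2
      have hk1 : k + 1 < r := by omega
      have hCk1 := ih (k + 1) hk1 (by omega)
      -- v at (k+1)*m equals m-1
      have hrun : ∀ p, (k + 1) * m < p → p ≤ (k + 1) * m + (m - 1) → p ∈ desSet v := by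
        intro p hp1 hp2
        have : p = (k + 1) * m + (p - (k + 1) * m) := by omega
        rw [this]
        exact hCk1 _ (by omega) (by omega)
      have hkm_lt : (k + 1) * m + (m - 1) < N := by
        have : (k + 1 + 1) * m ≤ r * m := Nat.mul_le_mul_right m (by omega)
        have hb1 : (k + 1 + 1) * m = (k + 1) * m + m := by ring
        omega
      have hdec := run_dec v hrun (m - 1) ((k + 1) * m) le_rfl le_rfl
      have htop : letterAt v ((k + 1) * m) = m - 1 := by
        have h1 : letterAt v ((k + 1) * m) < m := letterAt_lt v (by omega)
        omega
      have hknd : (k + 1) * m ∈ ND := by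
        rw [hNDdef, Finset.mem_sdiff, Finset.mem_Ico]
        have hpos : 1 ≤ (k + 1) * m := Nat.mul_pos (by omega) hm
        refine ⟨⟨hpos, by omega⟩, ?_⟩
        intro hmem
        rw [mem_desSet] at hmem
        have h2 : letterAt v ((k + 1) * m - 1) < m := letterAt_lt v (by omega)
        omega
      obtain ⟨k', hk'1, hk'2, hk'3, hk'4⟩ := hNDchar _ hknd
      have hk'eq : k' = k := by
        have hb1 : (k + 1) * m = k * m + m := by ring
        have h1 : k' * m < k * m + m := by omega
        have h2 : k * m + m ≤ k' * m + m := by omega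
        have h3 : k' < k + 1 := by
          by_contra h
          have : (k + 1) * m ≤ k' * m := Nat.mul_le_mul_right m (by omega)
          omega
        have h4 : k ≤ k' := by
          by_contra h
          have : (k' + 1) * m ≤ k * m := Nat.mul_le_mul_right m (by omega)
          have : (k' + 1) * m = k' * m + m := by ring
          omega
        omega
      -- now g k' = (k+1)*m ; conclude block k interior is all descents
      apply hmemD
      · omega
      · have : (k + 1) * m ≤ (r - 1) * m := Nat.mul_le_mul_right m (by omega)
        have hb1 : (k + 1) * m = k * m + m := by ring
        omega
      · intro hpND
        obtain ⟨k'', hk''1, hk''2, hk''3, hk''4⟩ := hNDchar _ hpND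
        have hb1 : (k + 1) * m = k * m + m := by ring
        have hk''eq : k'' = k := by
          have h3 : k'' < k + 1 := by
            by_contra h
            have : (k + 1) * m ≤ k'' * m := Nat.mul_le_mul_right m (by omega)
            omega
          have h4 : k ≤ k'' := by
            by_contra h
            have : (k'' + 1) * m ≤ k * m := Nat.mul_le_mul_right m (by omega)
            have : (k'' + 1) * m = k'' * m + m := by ring
            omega
          omega
        have e5 : g k'' = g k' := by rw [hk''eq, hk'eq]
        -- g k'' = k*m + s and g k' = (k+1)*m : contradiction
        omega
  -- conclude letter values
  intro j
  have hj : (j : ℕ) < N := j.isLt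
  set q := (j : ℕ) / m with hq
  set s := (j : ℕ) % m with hs
  have hqs : m * q + s = (j : ℕ) := Nat.div_add_mod _ m
  have hsm : s < m := Nat.mod_lt _ hm
  have hqr : q < r := by
    rw [hq, Nat.div_lt_iff_lt_mul hm]
    omega
  have hCq := C (r - 1 - q) q hqr rfl
  have hrun : ∀ p, q * m < p → p ≤ q * m + (m - 1) → p ∈ desSet v := by
    intro p hp1 hp2
    have : p = q * m + (p - q * m) := by omega
    rw [this]
    exact hCq _ (by omega) (by omega)
  have hqm_lt : q * m + (m - 1) < N := by
    have : (q + 1) * m ≤ r * m := Nat.mul_le_mul_right m (by omega)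
    have hb1 : (q + 1) * m = q * m + m := by ring
    omega
  have hdec1 := run_dec v hrun (m - 1 - s) (q * m + s) (by omega) (by omega)
  have hdec2 := run_dec v hrun s (q * m) le_rfl (by omega)
  have htop : letterAt v (q * m) < m := letterAt_lt v (by omega)
  have hcomm : m * q = q * m := by ring
  have hjq : q * m + s = (j : ℕ) := by omega
  have e1 : q * m + s + (m - 1 - s) = q * m + (m - 1) := by omega
  rw [e1] at hdec1
  rw [hjq] at hdec2
  have hlow : letterAt v (q * m + (m - 1)) + (m - 1 - s) ≤ letterAt v (j : ℕ) := by
    rw [← hjq]; exact hdec1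
  have hjN : letterAt v (j : ℕ) = (v j : ℕ) := by
    rw [letterAt_eq v hj]
  omega

lemma sum_list_range (f : ℕ → ℕ) (n : ℕ) :
    ((List.range n).map f).sum = ∑ i ∈ Finset.range n, f i := by
  induction n with
  | zero => simp
  | succ n ih => rw [List.range_succ, List.map_append, List.sum_append,
      Finset.sum_range_succ, ih]; simp

lemma stair_head {a : ℕ} (L : List ℕ) (ha : 1 ≤ a) : (stair (a :: L)).getD 0 0 = a - 1 := by
  rw [stair, List.getD_append _ _ _ _ (by simp; omega), getD_runL ha]
  omega

lemma stair_word {N m : ℕ} (hm : 0 < m) (L : List ℕ) (hsum : L.sum = N)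
    (hent : ∀ a ∈ L, 1 ≤ a ∧ a ≤ m) :
    ∃ u : Fin N → Fin m,
      (∀ j : Fin N, (u j : ℕ) = (stair L).getD (j : ℕ) 0) ∧
      (∀ c : Fin m, ((Finset.univ : Finset (Fin N)).filter fun j => u j = c).card
          = L.countP (fun a => (c : ℕ) < a)) ∧
      des u = N - L.length := by
  have hlen : (stair L).length = N := by rw [length_stair, hsum]
  have hlt : ∀ j : Fin N, (stair L).getD (j : ℕ) 0 < m := by
    intro j
    have hjl : (j : ℕ) < (stair L).length := by rw [hlen]; exact j.isLt
    rw [List.getD_eq_getElem _ _ hjl]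
    obtain ⟨a, haL, hxa⟩ := mem_stair_lt (List.getElem_mem hjl)
    exact lt_of_lt_of_le hxa (hent a haL).2
  refine ⟨fun j => ⟨(stair L).getD (j : ℕ) 0, hlt j⟩, fun j => rfl, ?_, ?_⟩
  · intro c
    rw [count_bridge _ (stair L) hlen (fun j => rfl) c, count_stair]
  · rw [des_bridge _ (stair L) hlen (fun j => rfl)]
    have h1 := ldes_stair (fun a ha => (hent a ha).1)
    have h2 := length_le_sum (fun a ha => (hent a ha).1)
    omega

/-! ### tcount lemmas -/

lemma card_fin_val_lt (m c : ℕ) (hc : c ≤ m) :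
    ((Finset.univ : Finset (Fin m)).filter fun i => i.val < c).card = c := by
  rw [card_filter_fin m (fun x => x < c)]
  have : (Finset.range m).filter (fun x => x < c) = Finset.range c := by
    ext x
    simp only [Finset.mem_filter, Finset.mem_range]
    omega
  rw [this, Finset.card_range]

lemma card_fin_val_le {m : ℕ} (c : Fin m) :
    ((Finset.univ : Finset (Fin m)).filter fun i => i.val ≤ c.val).card = (c : ℕ) + 1 := by
  rw [card_filter_fin m (fun x => x ≤ (c : ℕ))]
  have : (Finset.range m).filter (fun x => x ≤ (c : ℕ)) = Finset.range ((c : ℕ) + 1) := by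
    ext x
    have := c.isLt
    simp only [Finset.mem_filter, Finset.mem_range]
    omega
  rw [this, Finset.card_range]

lemma tcount_equiv {m : ℕ} (lam : Fin m → ℕ) (hanti : Antitone lam) (c : Fin m) (k : ℕ) :
    (c : ℕ) < ((Finset.univ.filter fun i => k < lam i).card) ↔ k < lam c := by
  constructor
  · intro h
    by_contra hk
    push_neg at hk
    have hsub : (Finset.univ.filter fun i => k < lam i)
        ⊆ Finset.univ.filter fun i : Fin m => i.val < c.val := by
      intro i hi
      rw [Finset.mem_filter] at hi ⊢
      refine ⟨Finset.mem_univ _, ?_⟩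
      by_contra hic
      push_neg at hic
      have : lam i ≤ lam c := hanti (by rwa [Fin.le_def])
      omega
    have := Finset.card_le_card hsub
    rw [card_fin_val_lt m c.val (le_of_lt c.isLt)] at this
    omega
  · intro h
    have hsub : (Finset.univ.filter fun i : Fin m => i.val ≤ c.val)
        ⊆ Finset.univ.filter fun i => k < lam i := by
      intro i hi
      rw [Finset.mem_filter] at hi ⊢
      refine ⟨Finset.mem_univ _, ?_⟩
      have : lam c ≤ lam i := hanti (by rw [Fin.le_def]; exact hi.2)
      omega
    have := Finset.card_le_card hsub
    rw [card_fin_val_le c] at this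
    omega

lemma T_props {m N : ℕ} (hm : 0 < m) (lam : Fin m → ℕ) (hanti : Antitone lam)
    (hpos : ∀ i, 1 ≤ lam i) (hN : N = ∑ i, lam i) :
    ((List.range (lam ⟨0, hm⟩)).map
        (fun k => (Finset.univ.filter fun i => k < lam i).card)).sum = N ∧
    (∀ a ∈ (List.range (lam ⟨0, hm⟩)).map
        (fun k => (Finset.univ.filter fun i => k < lam i).card), 1 ≤ a ∧ a ≤ m) ∧
    (∀ c : Fin m, ((List.range (lam ⟨0, hm⟩)).map
        (fun k => (Finset.univ.filter fun i => k < lam i).card)).countP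
          (fun a => c.val < a) = lam c) := by
  set R := lam ⟨0, hm⟩ with hRdef
  set tcount : ℕ → ℕ := fun k => (Finset.univ.filter fun i => k < lam i).card with htcdef
  have hle : ∀ i : Fin m, lam i ≤ R := by
    intro i
    exact hanti (by rw [Fin.le_def]; exact Nat.zero_le _)
  refine ⟨?_, ?_, ?_⟩
  · rw [sum_list_range]
    have e1 : ∀ k, tcount k = ∑ i : Fin m, if k < lam i then 1 else 0 := by
      intro k
      rw [htcdef]
      exact Finset.card_filter _ _
    calc ∑ k ∈ Finset.range R, tcount k
        = ∑ k ∈ Finset.range R, ∑ i : Fin m, if k < lam i then 1 else 0 :=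
          Finset.sum_congr rfl (fun k _ => e1 k)
      _ = ∑ i : Fin m, ∑ k ∈ Finset.range R, if k < lam i then 1 else 0 :=
          Finset.sum_comm
      _ = ∑ i : Fin m, lam i := by
          apply Finset.sum_congr rfl
          intro i _
          rw [← Finset.card_filter]
          have : (Finset.range R).filter (fun k => k < lam i) = Finset.range (lam i) := by
            ext x
            have := hle i
            simp only [Finset.mem_filter, Finset.mem_range]
            omega
          rw [this, Finset.card_range]
      _ = N := hN.symm
  · intro a ha
    rw [List.mem_map] at ha
    obtain ⟨k, hk, rfl⟩ := ha
    rw [List.mem_range] at hk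
    constructor
    · have : (⟨0, hm⟩ : Fin m) ∈ Finset.univ.filter fun i => k < lam i := by
        rw [Finset.mem_filter]
        exact ⟨Finset.mem_univ _, by omega⟩
      exact Finset.card_pos.mpr ⟨_, this⟩
    · calc (Finset.univ.filter fun i => k < lam i).card
          ≤ (Finset.univ : Finset (Fin m)).card := Finset.card_le_card (Finset.filter_subset _ _)
        _ = m := by simp
  · intro c
    rw [List.countP_map, countP_range]
    have e2 : ((Finset.range R).filter fun k =>
        ((fun a => decide (c.val < a)) ∘ tcount) k = true) =
        (Finset.range R).filter fun k => k < lam c := by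
      apply Finset.filter_congr
      intro k _
      simp only [Function.comp, decide_eq_true_eq]
      constructor
      · intro h; exact (tcount_equiv lam hanti c k).mp h
      · intro h; exact (tcount_equiv lam hanti c k).mpr h
    rw [e2]
    have : (Finset.range R).filter (fun k => k < lam c) = Finset.range (lam c) := by
      ext x
      have := hle c
      simp only [Finset.mem_filter, Finset.mem_range]
      omega
    rw [this, Finset.card_range]

/-- **Lemma 2.3**: `λ` is a rectangle iff `des` attains its maximum on `S_λ` at a unique
element. Moreover, if `λ = (r^m)`, then both `des` and `maj` attain their maxima at the word
`w₀ = (m (m−1) ⋯ 2 1)^r`, with `des(w₀) = r(m−1)` and `maj(w₀) = r²·binom(m,2)`. -/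
theorem rectangle_iff_unique_des_max (m N : ℕ) (hm : 0 < m) (lam : Fin m → ℕ)
    (hanti : Antitone lam) (hpos : ∀ i, 1 ≤ lam i) (hN : N = ∑ i, lam i) :
    ((∀ i j, lam i = lam j) ↔
      ∃! w : Fin N → Fin m, w ∈ multisetPerms N m lam ∧
        ∀ v ∈ multisetPerms N m lam, des v ≤ des w) ∧
    ∀ r : ℕ, (∀ i, lam i = r) →
      (fun j : Fin N => (⟨m - 1 - ((j : ℕ) % m), by omega⟩ : Fin m)) ∈ multisetPerms N m lam ∧
      (∀ v ∈ multisetPerms N m lam,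
        des v ≤ des (fun j : Fin N => (⟨m - 1 - ((j : ℕ) % m), by omega⟩ : Fin m))) ∧
      (∀ v ∈ multisetPerms N m lam,
        maj v ≤ maj (fun j : Fin N => (⟨m - 1 - ((j : ℕ) % m), by omega⟩ : Fin m))) ∧
      des (fun j : Fin N => (⟨m - 1 - ((j : ℕ) % m), by omega⟩ : Fin m)) = r * (m - 1) ∧
      maj (fun j : Fin N => (⟨m - 1 - ((j : ℕ) % m), by omega⟩ : Fin m)) =
        r ^ 2 * Nat.choose m 2 := by
  have hpart2 : ∀ r : ℕ, (∀ i, lam i = r) →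
      (fun j : Fin N => (⟨m - 1 - ((j : ℕ) % m), by omega⟩ : Fin m)) ∈ multisetPerms N m lam ∧
      (∀ v ∈ multisetPerms N m lam,
        des v ≤ des (fun j : Fin N => (⟨m - 1 - ((j : ℕ) % m), by omega⟩ : Fin m))) ∧
      (∀ v ∈ multisetPerms N m lam,
        maj v ≤ maj (fun j : Fin N => (⟨m - 1 - ((j : ℕ) % m), by omega⟩ : Fin m))) ∧
      des (fun j : Fin N => (⟨m - 1 - ((j : ℕ) % m), by omega⟩ : Fin m)) = r * (m - 1) ∧
      maj (fun j : Fin N => (⟨m - 1 - ((j : ℕ) % m), by omega⟩ : Fin m)) =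
        r ^ 2 * Nat.choose m 2 := by
    intro r hall
    have hN' : N = r * m := by
      rw [hN, Finset.sum_congr rfl (fun i _ => hall i), Finset.sum_const,
        Finset.card_univ, Fintype.card_fin, smul_eq_mul, mul_comm]
    have hw0 : ∀ j : Fin N,
        (((fun j : Fin N => (⟨m - 1 - ((j : ℕ) % m), by omega⟩ : Fin m)) j) : ℕ)
          = m - 1 - ((j : ℕ) % m) := fun j => rfl
    have hdes0 := w0_des_val hm hN' _ hw0
    have hmaj0 := w0_maj_val hm hN' _ hw0
    refine ⟨?_, ?_, ?_, hdes0, hmaj0⟩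
    · rw [multisetPerms, Finset.mem_filter]
      refine ⟨Finset.mem_univ _, fun i => ?_⟩
      rw [hall i]
      exact w0_mem hm hN' _ hw0 i
    · intro v _
      calc des v ≤ r * (m - 1) := des_le_global hm hN' v
        _ = _ := hdes0.symm
    · intro v _
      exact w0_maj_max hm hN' _ hw0 v
  refine ⟨⟨?_, ?_⟩, hpart2⟩
  · -- rectangle → unique maximizer
    intro hrect
    have hall : ∀ i, lam i = lam ⟨0, hm⟩ := fun i => hrect i ⟨0, hm⟩
    set r := lam ⟨0, hm⟩ with hrdef
    have hN' : N = r * m := by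
      rw [hN, Finset.sum_congr rfl (fun i _ => hall i), Finset.sum_const,
        Finset.card_univ, Fintype.card_fin, smul_eq_mul, mul_comm]
    obtain ⟨hmem, hmax, _, hdesval, _⟩ := hpart2 r hall
    refine ⟨_, ⟨hmem, hmax⟩, ?_⟩
    rintro y ⟨hymem, hymax⟩
    have h1 : des y ≤ r * (m - 1) := des_le_global hm hN' y
    have h2 : r * (m - 1) ≤ des y := by
      have := hymax _ hmem
      rw [hdesval] at this
      exact this
    have hy := unique_max_des hm hN' y (le_antisymm h1 h2)
    funext j
    apply Fin.ext
    rw [hy j]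
  · -- unique maximizer → rectangle
    intro hEU
    by_contra hnrect
    push_neg at hnrect
    obtain ⟨i0, j0, hij⟩ := hnrect
    have hm2 : 2 ≤ m := by
      by_contra h
      push_neg at h
      apply hij
      have : i0 = j0 := by
        apply Fin.ext
        have := i0.isLt
        have := j0.isLt
        omega
      rw [this]
    set R := lam ⟨0, hm⟩ with hRdef
    have hle : ∀ i : Fin m, lam i ≤ R := by
      intro i
      exact hanti (by rw [Fin.le_def]; exact Nat.zero_le _)
    have hlastR : lam ⟨m - 1, by omega⟩ < R := by
      rcases lt_or_ge (lam ⟨m - 1, by omega⟩) R with h | h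
      · exact h
      · exfalso
        apply hij
        have hge : ∀ i : Fin m, R ≤ lam i := by
          intro i
          refine le_trans h (hanti ?_)
          have hi := i.isLt
          rw [Fin.le_def]
          show (i : ℕ) ≤ m - 1
          omega
        have heq : ∀ i, lam i = R := fun i => le_antisymm (hle i) (hge i)
        rw [heq i0, heq j0]
    have hR2 : 2 ≤ R := by
      have := hpos ⟨m - 1, by omega⟩
      omega
    set tcount : ℕ → ℕ := fun k => (Finset.univ.filter fun i => k < lam i).card with htcdef
    set T : List ℕ := (List.range R).map tcount with hTdef
    obtain ⟨hTsum, hTent, hTcount⟩ := T_props hm lam hanti hpos hN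
    have hTlen : T.length = R := by rw [hTdef, List.length_map, List.length_range]
    -- the two words
    obtain ⟨uX, hXval, hXcount, hXdes⟩ := stair_word (N := N) hm T hTsum hTent
    obtain ⟨uY, hYval, hYcount, hYdes⟩ := stair_word (N := N) hm T.reverse
      (by rw [List.sum_reverse]; exact hTsum)
      (fun a ha => hTent a (List.mem_reverse.mp ha))
    have hmemX : uX ∈ multisetPerms N m lam := by
      rw [multisetPerms, Finset.mem_filter]
      exact ⟨Finset.mem_univ _, fun i => by rw [hXcount i]; exact hTcount i⟩
    have hmemY : uY ∈ multisetPerms N m lam := by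
      rw [multisetPerms, Finset.mem_filter]
      refine ⟨Finset.mem_univ _, fun i => ?_⟩
      rw [hYcount i, List.countP_reverse]
      exact hTcount i
    have hmaxgen : ∀ v ∈ multisetPerms N m lam, des v ≤ N - R := by
      intro v hv
      rw [multisetPerms, Finset.mem_filter] at hv
      exact des_le_of_count hm v R (by rw [hRdef]; exact hpos _) (by rw [hv.2 ⟨0, hm⟩])
    have hmaxX : ∀ v ∈ multisetPerms N m lam, des v ≤ des uX := by
      intro v hv
      rw [hXdes, hTlen]
      exact hmaxgen v hv
    have hmaxY : ∀ v ∈ multisetPerms N m lam, des v ≤ des uY := by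
      intro v hv
      rw [hYdes, List.length_reverse, hTlen]
      exact hmaxgen v hv
    -- distinctness
    have hN0 : 0 < N := by
      have h1 : lam ⟨0, hm⟩ ≤ ∑ i, lam i :=
        Finset.single_le_sum (fun i _ => Nat.zero_le _) (Finset.mem_univ _)
      have := hpos ⟨0, hm⟩
      omega
    obtain ⟨R', hR'⟩ : ∃ R', R = R' + 1 := ⟨R - 1, by omega⟩
    have htc0 : tcount 0 = m := by
      rw [htcdef]
      have : (Finset.univ.filter fun i : Fin m => 0 < lam i) = Finset.univ := by
        apply Finset.filter_true_of_mem
        intro i _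
        exact hpos i
      simp only [this]
      simp
    have htcR' : tcount R' ≤ m - 1 := by
      rw [htcdef]
      have hsub : (Finset.univ.filter fun i : Fin m => R' < lam i)
          ⊆ Finset.univ.erase ⟨m - 1, by omega⟩ := by
        intro i hi
        rw [Finset.mem_filter] at hi
        rw [Finset.mem_erase]
        refine ⟨?_, Finset.mem_univ _⟩
        intro heq
        rw [heq] at hi
        omega
      calc (Finset.univ.filter fun i : Fin m => R' < lam i).card
          ≤ (Finset.univ.erase (⟨m - 1, by omega⟩ : Fin m)).card := Finset.card_le_card hsub
        _ = m - 1 := by rw [Finset.card_erase_of_mem (Finset.mem_univ _)]; simp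
    have htcR'pos : 1 ≤ tcount R' := by
      rw [htcdef]
      apply Finset.card_pos.mpr
      refine ⟨⟨0, hm⟩, ?_⟩
      rw [Finset.mem_filter]
      exact ⟨Finset.mem_univ _, by omega⟩
    have hTeq : T = tcount 0 :: ((List.range R').map Nat.succ).map tcount := by
      rw [hTdef, hR', List.range_succ_eq_map, List.map_cons]
    have hTrev : T.reverse = tcount R' :: ((List.range R').reverse).map tcount := by
      rw [hTdef, ← List.map_reverse]
      have : (List.range (R' + 1)).reverse = R' :: (List.range R').reverse := by
        rw [List.range_succ, List.reverse_append]
        simp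
      rw [hR', this, List.map_cons]
    have hvalX : (uX ⟨0, hN0⟩ : ℕ) = m - 1 := by
      rw [hXval ⟨0, hN0⟩]
      show (stair T).getD 0 0 = m - 1
      rw [hTeq, stair_head _ (by omega), htc0]
    have hvalY : (uY ⟨0, hN0⟩ : ℕ) = tcount R' - 1 := by
      rw [hYval ⟨0, hN0⟩]
      show (stair T.reverse).getD 0 0 = tcount R' - 1
      rw [hTrev, stair_head _ htcR'pos]
    have hneq : uX ≠ uY := by
      intro h
      have := congrFun h ⟨0, hN0⟩
      rw [Fin.ext_iff, hvalX, hvalY] at this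
      omega
    obtain ⟨w, _, huniq⟩ := hEU
    exact hneq ((huniq uX ⟨hmemX, hmaxX⟩).trans (huniq uY ⟨hmemY, hmaxY⟩).symm)
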